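/- Let a < 0, r > 1 and σ = -a·r. Then (σ-ar)² + 4aσ = 4a²r(r-1) ≥ 0, and the quantity ξ = (σ/(2a²))·(a(r-2) - σ + √((σ-ar)² + 4aσ)) satisfies ξ = r(√(r(r-1)) - (r-1)) > 0. -/

import Mathlib

/-- For `a < 0`, `r > 1`, `σ = -a*r`, one has
`(σ - a r)² + 4 a σ = 4 a² r (r-1) ≥ 0`, and
`ξ = (σ/(2a²))·(a(r-2) - σ + √((σ-ar)² + 4aσ)) = r(√(r(r-1)) - (r-1)) > 0`. -/
theorem lorenz_xi_formula (a r σ ξ : ℝ) (ha : a < 0) (hr : 1 < r)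
    (hσ : σ = -a * r)
    (hξ : ξ = σ / (2 * a ^ 2) *
      (a * (r - 2) - σ + Real.sqrt ((σ - a * r) ^ 2 + 4 * a * σ))) :
    (σ - a * r) ^ 2 + 4 * a * σ = 4 * a ^ 2 * r * (r - 1) ∧
    0 ≤ (σ - a * r) ^ 2 + 4 * a * σ ∧
    ξ = r * (Real.sqrt (r * (r - 1)) - (r - 1)) ∧
    0 < ξ := by
  have hr0 : (0:ℝ) < r := by linarith
  have hrr : (0:ℝ) ≤ r * (r - 1) := by nlinarith
  have h1 : (σ - a * r) ^ 2 + 4 * a * σ = 4 * a ^ 2 * r * (r - 1) := by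
    subst hσ; ring
  have hsq : Real.sqrt ((σ - a * r) ^ 2 + 4 * a * σ)
      = -2 * a * Real.sqrt (r * (r - 1)) := by
    rw [h1]
    have : 4 * a ^ 2 * r * (r - 1) = (-2 * a) ^ 2 * (r * (r - 1)) := by ring
    rw [this, Real.sqrt_mul (sq_nonneg _), Real.sqrt_sq (by linarith)]
  have hξ' : ξ = r * (Real.sqrt (r * (r - 1)) - (r - 1)) := by
    rw [hξ, hsq, hσ]
    have ha2 : a ^ 2 ≠ 0 := pow_ne_zero _ (ne_of_lt ha)
    have ha0 : a ≠ 0 := ne_of_lt ha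
    field_simp
    ring
  have hgt : r - 1 < Real.sqrt (r * (r - 1)) := by
    have : (r - 1) ^ 2 < r * (r - 1) := by nlinarith
    nlinarith [Real.sq_sqrt hrr, Real.sqrt_nonneg (r * (r - 1))]
  refine ⟨h1, by nlinarith, hξ', ?_⟩
  rw [hξ']
  nlinarith
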